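/- arXiv:2601.05972 — 4 statements merged into one kernel-verified Lean document; each statement's English description precedes it below -/
import Mathlib

section
/- For every flat layout L, the layout squeeze(L) satisfies: (1) size(squeeze(L)) = size(L); (2) cosize(squeeze(L)) = cosize(L); (3) the layout functions agree, i.e. Φ_{squeeze(L)}(x) = Φ_L(x) for every x ∈ {0,…,size(L)−1}. -/
/-- A flat layout, represented as its list of modes `(sᵢ, dᵢ)`:
the first component of each mode is a shape entry, the second a stride entry. -/
abbrev FlatLayout := List (ℕ × ℕ)

namespace FlatLayout

/-- Validity of a flat layout: every shape entry is a positive integer. -/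
def Valid (L : FlatLayout) : Prop := ∀ p ∈ L, 0 < p.1

/-- The size of a flat layout: the product of its shape entries. -/
def size (L : FlatLayout) : ℕ := (L.map Prod.fst).prod

/-- The cosize of a flat layout: `1 + Σ (sᵢ - 1) * dᵢ`. -/
def cosize (L : FlatLayout) : ℕ := 1 + (L.map fun p => (p.1 - 1) * p.2).sum

/-- The rank of a flat layout: its number of modes. -/
def rank (L : FlatLayout) : ℕ := L.length

/-- The layout function `Φ_L`: `Φ_L(x) = Σ xᵢ·dᵢ` where
`xᵢ = ⌊x / (s₁⋯sᵢ₋₁)⌋ mod sᵢ`. -/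
def phi : FlatLayout → ℕ → ℕ
  | [], _ => 0
  | (s, d) :: rest, x => x % s * d + phi rest (x / s)

/-- `squeeze L` deletes every mode whose shape entry equals `1`. -/
def squeeze (L : FlatLayout) : FlatLayout := L.filter fun p => p.1 != 1

/-- `filterZeros L` deletes every mode whose stride entry equals `0`. -/
def filterZeros (L : FlatLayout) : FlatLayout := L.filter fun p => p.2 != 0

/-- The ordering on modes: `(s,d) ⪯ (s',d')` iff `d < d'`, or `d = d'` and `s ≤ s'`. -/
def ModeLE (p q : ℕ × ℕ) : Prop := p.2 < q.2 ∨ (p.2 = q.2 ∧ p.1 ≤ q.1)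

instance : DecidableRel ModeLE := fun p q => by unfold ModeLE; infer_instance

/-- A flat layout is sorted if its consecutive modes are `⪯`-increasing. -/
def Sorted (L : FlatLayout) : Prop := L.Chain' ModeLE

/-- `sortL L` stably sorts the modes of `L` with respect to `⪯`. -/
def sortL (L : FlatLayout) : FlatLayout := L.mergeSort fun p q => decide (ModeLE p q)

/-- A flat layout is coalesced if no shape entry equals `1` and
for consecutive modes, `sᵢ·dᵢ ≠ dᵢ₊₁`. -/
def Coalesced (L : FlatLayout) : Prop :=
  (∀ p ∈ L, p.1 ≠ 1) ∧ L.Chain' fun p q => p.1 * p.2 ≠ q.2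

/-- Combine adjacent modes `(s,d), (s',d')` with `d' = s·d` into `(s·s', d)`, repeatedly. -/
def coalAux : List (ℕ × ℕ) → List (ℕ × ℕ)
  | [] => []
  | p :: rest =>
    match coalAux rest with
    | [] => [p]
    | q :: rest' =>
        if p.1 * p.2 = q.2 then (p.1 * q.1, p.2) :: rest' else p :: q :: rest'

/-- Coalesce of a flat layout: squeeze, then repeatedly combine adjacent modes
`(s,d), (s',d')` with `d' = s·d` into `(s·s', d)`. -/
def coal (L : FlatLayout) : FlatLayout := coalAux (squeeze L)

/-- Compactness: the layout function takes values in `{0, …, cosize L - 1}` and induces a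
bijection `{0, …, size L - 1} → {0, …, cosize L - 1}`. -/
def Compact (L : FlatLayout) : Prop :=
  Set.BijOn (phi L) {x | x < size L} {y | y < cosize L}

/-- `B` is a complement of `A` (written `A ⊥ B`) if the concatenation `A ⋆ B` is compact. -/
def Perp (A B : FlatLayout) : Prop := Compact (A ++ B)

/-- `A` is complementable if, writing `sort(squeeze A) = (s₁,…,sₘ):(d₁,…,dₘ)`,
`sᵢ·dᵢ` divides `dᵢ₊₁` for all `1 ≤ i < m`. -/
def Complementable (A : FlatLayout) : Prop :=
  (sortL (squeeze A)).Chain' fun p q => p.1 * p.2 ∣ q.2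

/-- `B` is an `N`-complement of `A` if `B` is a complement of `A`
and `size A * size B = N`. -/
def IsNComplement (A B : FlatLayout) (N : ℕ) : Prop :=
  Perp A B ∧ size A * size B = N

/-- `A` is `N`-complementable if, writing `sort(squeeze A) = (s₁,…,sₘ):(d₁,…,dₘ)`,
`sᵢ·dᵢ ∣ dᵢ₊₁` for all `1 ≤ i < m`, and `sₘ·dₘ ∣ N`. -/
def NComplementable (A : FlatLayout) (N : ℕ) : Prop :=
  ((sortL (squeeze A)).Chain' fun p q => p.1 * p.2 ∣ q.2) ∧
  ∀ p, (sortL (squeeze A)).getLast? = some p → p.1 * p.2 ∣ N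

/-- Given `l = [(s₁,d₁),…,(sₘ,dₘ)]`, the layout
`C = (d₁, d₂/(s₁d₁), …, dₘ/(sₘ₋₁dₘ₋₁)) : (1, s₁d₁, …, sₘ₋₁dₘ₋₁)`. -/
def compModes (l : List (ℕ × ℕ)) : List (ℕ × ℕ) :=
  match l with
  | [] => []
  | (_, d₁) :: t =>
      (d₁, 1) :: (l.zip t).map fun pq => (pq.2.2 / (pq.1.1 * pq.1.2), pq.1.1 * pq.1.2)

/-- The complement `comp A = coal C` of a complementable flat layout `A`. -/
def comp (A : FlatLayout) : FlatLayout := coal (compModes (sortL (squeeze A)))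

/-- Given `l = [(s₁,d₁),…,(sₘ,dₘ)]` and `N`, the layout
`C = (d₁, d₂/(s₁d₁), …, dₘ/(sₘ₋₁dₘ₋₁), N/(sₘdₘ)) : (1, s₁d₁, …, sₘ₋₁dₘ₋₁, sₘdₘ)`. -/
def compNModes (l : List (ℕ × ℕ)) (N : ℕ) : List (ℕ × ℕ) :=
  match l.getLast? with
  | none => [(N, 1)]
  | some (sm, dm) => compModes l ++ [(N / (sm * dm), sm * dm)]

/-- The `N`-complement `comp(A, N) = coal C` of an `N`-complementable flat layout `A`. -/
def compN (A : FlatLayout) (N : ℕ) : FlatLayout :=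
  coal (compNModes (sortL (squeeze A)) N)

/-- `L` is tractable if, writing `sort L = (s₁,…,sₘ):(d₁,…,dₘ)`, for every `1 ≤ i < m`
either `dᵢ = 0` or `sᵢ·dᵢ` divides `dᵢ₊₁`. -/
def Tractable (L : FlatLayout) : Prop :=
  (sortL L).Chain' fun p q => p.2 = 0 ∨ p.1 * p.2 ∣ q.2

end FlatLayout



namespace FlatLayout

theorem squeeze_size (L : FlatLayout) (hL : L.Valid) : size (squeeze L) = size L := by
  induction L with
  | nil => rfl
  | cons p t ih =>
    have hp : 0 < p.1 := hL p List.mem_cons_self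
    have ht : Valid t := fun q hq => hL q (List.mem_cons_of_mem _ hq)
    simp only [squeeze, size, List.filter_cons] at ih ⊢
    by_cases h1 : p.1 = 1
    · simp [h1, ih ht]
    · simp [h1, ih ht]

theorem squeeze_cosize (L : FlatLayout) (hL : L.Valid) : cosize (squeeze L) = cosize L := by
  induction L with
  | nil => rfl
  | cons p t ih =>
    have ht : Valid t := fun q hq => hL q (List.mem_cons_of_mem _ hq)
    have := ih ht
    by_cases h1 : p.1 = 1 <;>
      · simp [squeeze, cosize, List.filter_cons, h1] at *
        omega

theorem squeeze_phi (L : FlatLayout) (x : ℕ) : phi (squeeze L) x = phi L x := by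
  induction L generalizing x with
  | nil => rfl
  | cons p t ih =>
    obtain ⟨s, d⟩ := p
    simp only [squeeze, List.filter_cons] at ih ⊢
    by_cases h1 : s = 1
    · simp [h1, phi, ih, Nat.mod_one]
    · simp [h1, phi, ih]

end FlatLayout

open FlatLayout in
theorem squeeze_spec (L : FlatLayout) (hL : L.Valid) :
    size (squeeze L) = size L ∧
    cosize (squeeze L) = cosize L ∧
    ∀ x < size L, phi (squeeze L) x = phi L x := by
  exact ⟨squeeze_size L hL, squeeze_cosize L hL, fun x _ => squeeze_phi L x⟩
end

section
/- For every flat layout L, the layout coal(L) is coalesced, and its layout function agrees with that of L: Φ_{coal(L)}(x) = Φ_L(x) for every x ∈ {0,…,size(L)−1}. -/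
open FlatLayout

lemma phi_squeeze (L : FlatLayout) (hL : L.Valid) (x : ℕ) :
    phi (squeeze L) x = phi L x := by
  induction L generalizing x with
  | nil => rfl
  | cons p rest ih =>
    have hrest : Valid rest := fun q hq => hL q (List.mem_cons_of_mem _ hq)
    by_cases h1 : p.1 = 1
    · have : squeeze (p :: rest) = squeeze rest := by
        simp [squeeze, List.filter_cons, h1]
      rw [this, ih hrest]
      obtain ⟨s, d⟩ := p
      simp at h1; subst h1
      simp [phi, Nat.mod_one]
    · have : squeeze (p :: rest) = p :: squeeze rest := by
        simp [squeeze, List.filter_cons, h1]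
      rw [this]
      obtain ⟨s, d⟩ := p
      simp [phi, ih hrest]

lemma phi_coalAux (l : FlatLayout) (x : ℕ) : phi (coalAux l) x = phi l x := by
  induction l generalizing x with
  | nil => rfl
  | cons p rest ih =>
    obtain ⟨s, d⟩ := p
    cases hc : coalAux rest with
    | nil =>
      simp [coalAux, hc, phi]
      have := ih (x / s)
      rw [hc] at this
      simp [phi] at this
      omega
    | cons q rest' =>
      obtain ⟨s', d'⟩ := q
      have hrest : ∀ y, phi rest y = d' * (y % s') + phi rest' (y / s') := by
        intro y
        rw [← ih y, hc]
        simp [phi]; ring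
      by_cases hm : s * d = d'
      · simp only [coalAux, hc, hm, if_pos rfl]
        simp [phi, hrest, ← hm, Nat.mod_mul, Nat.div_div_eq_div_mul]
        ring
      · simp only [coalAux, hc, if_neg hm]
        simp [phi, hrest]; ring

lemma coalAux_strong (l : FlatLayout) (h : ∀ p ∈ l, 2 ≤ p.1) :
    (∀ p ∈ coalAux l, 2 ≤ p.1) ∧ (coalAux l).Chain' fun p q => p.1 * p.2 ≠ q.2 := by
  induction l with
  | nil => exact ⟨by simp [coalAux], List.isChain_nil⟩
  | cons p rest ih =>
    obtain ⟨hne, hchain⟩ := ih (fun q hq => h q (List.mem_cons_of_mem _ hq))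
    have hp : 2 ≤ p.1 := h p List.mem_cons_self
    cases hc : coalAux rest with
    | nil =>
      constructor
      · intro q hq
        simp [coalAux, hc] at hq
        subst hq; omega
      · simp [coalAux, hc]
        exact List.isChain_singleton _
    | cons q rest' =>
      rw [hc] at hne hchain
      have hq1 : 2 ≤ q.1 := hne q List.mem_cons_self
      by_cases hm : p.1 * p.2 = q.2
      · simp only [coalAux, hc, if_pos hm]
        refine ⟨?_, ?_⟩
        · intro r hr
          rcases List.mem_cons.mp hr with h' | h'
          · subst h'; simp; nlinarith
          · exact hne r (List.mem_cons_of_mem _ h')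
        · cases rest' with
          | nil => exact List.isChain_singleton _
          | cons r t =>
            refine List.isChain_cons_cons.mpr ⟨?_, (List.isChain_cons_cons.mp hchain).2⟩
            have hqr := (List.isChain_cons_cons.mp hchain).1
            intro heq
            apply hqr
            rw [← heq, ← hm]; ring
      · simp only [coalAux, hc, if_neg hm]
        exact ⟨fun r hr => by
          rcases List.mem_cons.mp hr with h' | h'
          · subst h'; exact hp
          · exact hne r h', List.isChain_cons_cons.mpr ⟨hm, hchain⟩⟩


open FlatLayout in
theorem coal_spec (L : FlatLayout) (hL : L.Valid) :
    Coalesced (coal L) ∧ ∀ x < size L, phi (coal L) x = phi L x := by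
  have hsq : ∀ p ∈ squeeze L, 2 ≤ p.1 := by
    intro p hp
    have hm := List.mem_filter.mp hp
    have := hL p hm.1
    have h1 : p.1 ≠ 1 := by simpa using hm.2
    omega
  obtain ⟨h1, h2⟩ := coalAux_strong (squeeze L) hsq
  refine ⟨⟨fun p hp => by have := h1 p hp; omega, h2⟩, fun x _ => ?_⟩
  rw [coal, phi_coalAux, phi_squeeze L hL]
end

section
/- Let L be a flat layout and write squeeze(L) = (s_1,…,s_m):(d_1,…,d_m). Then L is compact if and only if there exists a permutation σ of {1,…,m} such that d_{σ(i)} = s_{σ(1)}⋯s_{σ(i−1)} for all 1 ≤ i ≤ m (i.e., some permutation of squeeze(L) is column-major). -/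
namespace FlatLayout

lemma phi_nil (x : ℕ) : phi [] x = 0 := rfl

lemma phi_cons (s d : ℕ) (t : FlatLayout) (x : ℕ) :
    phi ((s, d) :: t) x = x % s * d + phi t (x / s) := rfl

lemma phi_zero (L : FlatLayout) : phi L 0 = 0 := by
  induction L with
  | nil => rfl
  | cons p t ih => obtain ⟨s, d⟩ := p; simp [phi_cons, ih]

lemma size_nil : size ([] : FlatLayout) = 1 := rfl

lemma size_cons (s d : ℕ) (t : FlatLayout) : size ((s,d)::t) = s * size t := by
  simp [size]

lemma size_pos {L : FlatLayout} (hL : Valid L) : 0 < size L := by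
  induction L with
  | nil => simp [size_nil]
  | cons p t ih =>
      obtain ⟨s, d⟩ := p
      rw [size_cons]
      exact Nat.mul_pos (hL (s,d) (by simp)) (ih fun q hq => hL q (by simp [hq]))

lemma cosize_cons (s d : ℕ) (t : FlatLayout) :
    cosize ((s,d)::t) = 1 + (s - 1) * d + (t.map fun p => (p.1 - 1) * p.2).sum := by
  simp [cosize]; ring

-- mod decomposition
lemma mod_mul_decomp (x s N : ℕ) : x % (s * N) = x % s + s * (x / s % N) := by
  rcases Nat.eq_zero_or_pos s with hs | hs
  · subst hs; simp
  rcases Nat.eq_zero_or_pos N with hN | hN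
  · subst hN; simp [Nat.mod_add_div]
  have h2 : x = x % s + s * (x / s % N) + (s * N) * (x / s / N) := by
    conv_lhs => rw [← Nat.mod_add_div x s, ← Nat.mod_add_div (x / s) N]
    ring
  have hlt : x % s + s * (x / s % N) < s * N := by
    have h3 : x % s < s := Nat.mod_lt _ hs
    have h4 : x / s % N < N := Nat.mod_lt _ hN
    calc x % s + s * (x / s % N) < s + s * (x / s % N) := by omega
    _ = s * (x / s % N + 1) := by ring
    _ ≤ s * N := Nat.mul_le_mul_left _ (by omega)
  conv_lhs => rw [h2]
  rw [Nat.add_mul_mod_self_left, Nat.mod_eq_of_lt hlt]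


-- squeeze lemmas
lemma squeeze_nil : squeeze ([] : FlatLayout) = [] := rfl

lemma squeeze_cons (p : ℕ × ℕ) (t : FlatLayout) :
    squeeze (p :: t) = if p.1 = 1 then squeeze t else p :: squeeze t := by
  by_cases h : p.1 = 1 <;> simp [squeeze, List.filter_cons, h]

lemma valid_squeeze {L : FlatLayout} (hL : Valid L) : Valid (squeeze L) :=
  fun p hp => hL p (List.mem_of_mem_filter hp)

lemma squeeze_shapes {L : FlatLayout} : ∀ p ∈ squeeze L, p.1 ≠ 1 := by
  intro p hp
  have := List.of_mem_filter hp
  simpa using this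

lemma size_squeeze (L : FlatLayout) : size (squeeze L) = size L := by
  induction L with
  | nil => rfl
  | cons p t ih =>
      obtain ⟨s, d⟩ := p
      rw [squeeze_cons]
      by_cases h : s = 1 <;> simp [h, size_cons, ih]

lemma cosize_squeeze (L : FlatLayout) : cosize (squeeze L) = cosize L := by
  suffices h : ((squeeze L).map fun p => (p.1 - 1) * p.2).sum
      = (L.map fun p => (p.1 - 1) * p.2).sum by
    simp [cosize, h]
  induction L with
  | nil => rfl
  | cons p t ih =>
      obtain ⟨s, d⟩ := p
      rw [squeeze_cons]
      by_cases h : s = 1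
      · subst h; simp [ih]
      · simp [h, ih]

lemma phi_squeeze {L : FlatLayout} (hL : Valid L) (x : ℕ) :
    phi (squeeze L) x = phi L x := by
  induction L generalizing x with
  | nil => rfl
  | cons p t ih =>
      obtain ⟨s, d⟩ := p
      have ht : Valid t := fun q hq => hL q (by simp [hq])
      rw [squeeze_cons]
      by_cases h : s = 1
      · subst h
        simp [phi_cons, Nat.mod_one, ih ht]
      · simp [h, phi_cons, ih ht]

lemma compact_squeeze {L : FlatLayout} (hL : Valid L) :
    Compact (squeeze L) ↔ Compact L := by
  unfold Compact
  rw [size_squeeze, cosize_squeeze]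
  constructor
  · intro h
    have : phi L = fun x => phi (squeeze L) x := by
      funext x; rw [phi_squeeze hL]
    rw [this]; exact h
  · intro h
    have : (fun x => phi (squeeze L) x) = phi L := by
      funext x; rw [phi_squeeze hL]
    show Set.BijOn (fun x => phi (squeeze L) x) _ _
    rw [this]; exact h

-- vals machinery
def vals (L : FlatLayout) : Multiset ℕ := (Multiset.range (size L)).map (phi L)

lemma range_mul_map (s : ℕ) (F : ℕ → ℕ → ℕ) :
    ∀ N : ℕ, (Multiset.range (s * N)).map (fun x => F (x % s) (x / s)) =
      (Multiset.range s).bind (fun r => (Multiset.range N).map (F r)) := by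
  intro N
  induction N with
  | zero => simp
  | succ N ih =>
      rw [Nat.mul_succ, Multiset.range_add, Multiset.map_add, ih]
      have h1 : ((Multiset.range s).map (fun x => (s * N) + x)).map (fun x => F (x % s) (x / s))
          = (Multiset.range s).map (fun r => F r N) := by
        rw [Multiset.map_map]
        refine Multiset.map_congr rfl ?_
        intro r hr
        have hrs : r < s := Multiset.mem_range.1 hr
        have hs : 0 < s := lt_of_le_of_lt (Nat.zero_le _) hrs
        simp only [Function.comp_apply]
        congr 1
        · rw [Nat.add_comm, Nat.add_mul_mod_self_left, Nat.mod_eq_of_lt hrs]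
        · rw [Nat.add_comm, Nat.add_mul_div_left _ _ hs, Nat.div_eq_of_lt hrs]; omega
      rw [h1]
      have h2 : ∀ r : ℕ, (Multiset.range (N + 1)).map (F r)
          = (Multiset.range N).map (F r) + {F r N} := by
        intro r
        rw [Multiset.range_add, Multiset.map_add]
        simp
      rw [Multiset.bind_congr (fun r _ => h2 r), Multiset.bind_add]
      congr 1
      rw [Multiset.bind_singleton]

lemma vals_cons (s d : ℕ) (t : FlatLayout) :
    vals ((s,d)::t) = (Multiset.range s).bind (fun r => (vals t).map (fun v => r * d + v)) := by
  unfold vals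
  rw [size_cons]
  have := range_mul_map s (fun r y => r * d + phi t y) (size t)
  have heq : (fun x => (fun r y => r * d + phi t y) (x % s) (x / s)) = phi ((s,d)::t) := by
    funext x; rw [phi_cons]
  rw [heq] at this
  rw [this]
  refine Multiset.bind_congr ?_
  intro r _
  rw [Multiset.map_map]
  rfl


lemma size_perm {L L' : FlatLayout} (h : L.Perm L') : size L = size L' :=
  (h.map Prod.fst).prod_eq

lemma cosize_perm {L L' : FlatLayout} (h : L.Perm L') : cosize L = cosize L' := by
  unfold cosize
  rw [(h.map fun p => (p.1 - 1) * p.2).sum_eq]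

lemma vals_perm {L L' : FlatLayout} (h : L.Perm L') : vals L = vals L' := by
  induction h with
  | nil => rfl
  | cons p h ih =>
      obtain ⟨s, d⟩ := p
      rw [vals_cons, vals_cons, ih]
  | swap p q t =>
      obtain ⟨s, d⟩ := p
      obtain ⟨s', d'⟩ := q
      rw [vals_cons, vals_cons, vals_cons, vals_cons]
      simp only [Multiset.map_bind, Multiset.map_map]
      rw [Multiset.bind_bind]
      refine Multiset.bind_congr fun r _ => Multiset.bind_congr fun r' _ => ?_
      refine Multiset.map_congr rfl fun v _ => ?_
      simp only [Function.comp_apply]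
      ring
  | trans _ _ ih1 ih2 => rw [ih1, ih2]

lemma compact_iff_vals (L : FlatLayout) :
    Compact L ↔ vals L = Multiset.range (cosize L) := by
  constructor
  · rintro ⟨hmt, hinj, hsurj⟩
    have hnd : (vals L).Nodup := by
      refine Multiset.Nodup.map_on ?_ (Multiset.nodup_range _)
      intro x hx y hy hxy
      exact hinj (Multiset.mem_range.1 hx) (Multiset.mem_range.1 hy) hxy
    refine Multiset.Nodup.ext hnd (Multiset.nodup_range _) |>.2 ?_
    intro a
    simp only [vals, Multiset.mem_map, Multiset.mem_range]
    constructor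
    · rintro ⟨x, hx, rfl⟩
      exact hmt hx
    · intro ha
      obtain ⟨x, hx, hfx⟩ := hsurj ha
      exact ⟨x, hx, hfx⟩
  · intro h
    refine ⟨?_, ?_, ?_⟩
    · intro x hx
      have : phi L x ∈ vals L :=
        Multiset.mem_map.2 ⟨x, Multiset.mem_range.2 hx, rfl⟩
      rw [h] at this
      exact Multiset.mem_range.1 this
    · intro x hx y hy hxy
      have hnd : (vals L).Nodup := h ▸ Multiset.nodup_range _
      exact Multiset.inj_on_of_nodup_map hnd x (Multiset.mem_range.2 hx)
        y (Multiset.mem_range.2 hy) hxy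
    · intro y hy
      have : y ∈ vals L := h ▸ Multiset.mem_range.2 hy
      obtain ⟨x, hx, hfx⟩ := Multiset.mem_map.1 this
      exact ⟨x, Multiset.mem_range.1 hx, hfx⟩

lemma compact_perm {L L' : FlatLayout} (h : L.Perm L') (hc : Compact L) : Compact L' := by
  rw [compact_iff_vals] at *
  rw [← vals_perm h, ← cosize_perm h]
  exact hc


/-- Column-major with accumulator `c`. -/
def CM : ℕ → FlatLayout → Prop
  | _, [] => True
  | c, p :: t => p.2 = c ∧ CM (c * p.1) t

lemma phi_CM {c : ℕ} {l : FlatLayout} (h : CM c l) (hv : Valid l) (x : ℕ) :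
    phi l x = x % size l * c := by
  induction l generalizing c x with
  | nil => simp [phi_nil, size_nil, Nat.mod_one]
  | cons p t ih =>
      obtain ⟨s, d⟩ := p
      obtain ⟨hd, hcm⟩ := h
      dsimp only at hd hcm
      subst hd
      have ht : Valid t := fun q hq => hv q (by simp [hq])
      rw [phi_cons, size_cons, ih hcm ht, mod_mul_decomp]
      ring

lemma cosize_CM {c : ℕ} {l : FlatLayout} (h : CM c l) (hv : Valid l) :
    cosize l = 1 + c * (size l - 1) := by
  induction l generalizing c with
  | nil => simp [cosize, size_nil]
  | cons p t ih =>
      obtain ⟨s, d⟩ := p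
      obtain ⟨hd, hcm⟩ := h
      dsimp only at hd hcm
      subst hd
      have ht : Valid t := fun q hq => hv q (by simp [hq])
      have hs : 0 < s := hv (s, d) (by simp)
      have hst : 0 < size t := size_pos ht
      have := ih hcm ht
      rw [cosize_cons, size_cons]
      have hsum : (t.map fun p => (p.1 - 1) * p.2).sum = (d * s) * (size t - 1) := by
        have h2 : cosize t = 1 + (d * s) * (size t - 1) := this
        unfold cosize at h2; omega
      rw [hsum]
      obtain ⟨k, rfl⟩ : ∃ k, s = k + 1 := ⟨s - 1, by omega⟩
      obtain ⟨M, hM⟩ : ∃ M, size t = M + 1 := ⟨size t - 1, by omega⟩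
      rw [hM]
      simp only [Nat.add_sub_cancel]
      have hexp : (k + 1) * (M + 1) - 1 = k * M + k + M := by
        have : (k + 1) * (M + 1) = k * M + k + M + 1 := by ring
        omega
      rw [hexp]; ring

lemma compact_of_CM {l : FlatLayout} (h : CM 1 l) (hv : Valid l) : Compact l := by
  have hphi : ∀ x, phi l x = x % size l := by
    intro x; rw [phi_CM h hv]; ring
  have hcos : cosize l = size l := by
    rw [cosize_CM h hv, one_mul]
    have := size_pos hv; omega
  refine ⟨?_, ?_, ?_⟩
  · intro x hx
    simp only [Set.mem_setOf_eq] at *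
    rw [hphi, hcos, Nat.mod_eq_of_lt hx]; exact hx
  · intro x hx y hy hxy
    simp only [Set.mem_setOf_eq] at hx hy
    rwa [hphi, hphi, Nat.mod_eq_of_lt hx, Nat.mod_eq_of_lt hy] at hxy
  · intro y hy
    simp only [Set.mem_setOf_eq] at hy
    rw [hcos] at hy
    exact ⟨y, hy, by rw [hphi, Nat.mod_eq_of_lt hy]⟩

lemma CM_iff_forall (c : ℕ) (l : FlatLayout) :
    CM c l ↔ ∀ k < l.length,
      (l.getD k (0,0)).2 = c * ∏ j ∈ Finset.range k, (l.getD j (0,0)).1 := by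
  induction l generalizing c with
  | nil => simp [CM]
  | cons p t ih =>
      constructor
      · rintro ⟨hd, hcm⟩ k hk
        cases k with
        | zero => simpa using hd
        | succ k =>
            have hk' : k < t.length := by simpa using hk
            have := (ih (c * p.1)).1 hcm k hk'
            rw [List.getD_cons_succ, this, Finset.prod_range_succ']
            simp only [List.getD_cons_succ, List.getD_cons_zero]
            ring
      · intro h
        refine ⟨by simpa using h 0 (by simp), (ih (c * p.1)).2 ?_⟩
        intro k hk
        have := h (k + 1) (by simpa using hk)
        rw [List.getD_cons_succ, Finset.prod_range_succ'] at this
        simp only [List.getD_cons_succ, List.getD_cons_zero] at this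
        rw [this]; ring


lemma lt_mul_of_digits {r s y N : ℕ} (hr : r < s) (hy : y < N) : r + s * y < s * N :=
  calc r + s * y < s + s * y := by omega
  _ = s * (y + 1) := by ring
  _ ≤ s * N := Nat.mul_le_mul_left _ (by omega)

lemma exists_stride_one : ∀ (l : FlatLayout) (x : ℕ), phi l x = 1 → ∃ p ∈ l, p.2 = 1 := by
  intro l
  induction l with
  | nil => intro x hx; simp [phi_nil] at hx
  | cons p t ih =>
      obtain ⟨s, d⟩ := p
      intro x hx
      rw [phi_cons] at hx
      rcases (by omega : x % s * d = 1 ∨ phi t (x / s) = 1) with h | h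
      · exact ⟨(s, d), by simp, Nat.dvd_one.1 ⟨x % s, by rw [← h]; ring⟩⟩
      · obtain ⟨q, hq, hq2⟩ := ih _ h
        exact ⟨q, by simp [hq], hq2⟩

lemma strideDvd (s : ℕ) : ∀ (T : FlatLayout), Valid T → (∀ p ∈ T, p.1 ≠ 1) →
    (∀ y < size T, s ∣ phi T y) → ∀ p ∈ T, s ∣ p.2 := by
  intro T
  induction T with
  | nil => simp
  | cons p t ih =>
      obtain ⟨s', d'⟩ := p
      intro hv hsh hdvd q hq
      have hs' : 2 ≤ s' := by
        have h1 := hv (s', d') (by simp)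
        have h2 := hsh (s', d') (by simp)
        simp at h1 h2; omega
      have hvt : Valid t := fun q hq => hv q (by simp [hq])
      have hsht : ∀ p ∈ t, p.1 ≠ 1 := fun q hq => hsh q (by simp [hq])
      have hst : 0 < size t := size_pos hvt
      rcases List.mem_cons.1 hq with rfl | hqt
      · have h1 : (1 : ℕ) < size ((s', d') :: t) := by
          rw [size_cons]
          calc 1 < 2 := by omega
          _ ≤ 2 * size t := by omega
          _ ≤ s' * size t := Nat.mul_le_mul_right _ (by omega)
        have := hdvd 1 h1
        rw [phi_cons, Nat.mod_eq_of_lt (by omega), Nat.div_eq_of_lt (by omega),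
          phi_zero, one_mul, Nat.add_zero] at this
        exact this
      · refine ih hvt hsht ?_ q hqt
        intro y hy
        have hb : s' * y < size ((s', d') :: t) := by
          rw [size_cons]; exact (Nat.mul_lt_mul_left (show 0 < s' by omega)).2 hy
        have := hdvd (s' * y) hb
        rwa [phi_cons, Nat.mul_mod_right, Nat.zero_mul, Nat.zero_add,
          Nat.mul_div_cancel_left _ (by omega)] at this

lemma map_div_mul {s : ℕ} : ∀ (T : FlatLayout), (∀ p ∈ T, s ∣ p.2) →
    (T.map fun p => (p.1, p.2 / s)).map (fun p => (p.1, p.2 * s)) = T := by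
  intro T
  induction T with
  | nil => simp
  | cons p t ih =>
      intro h
      obtain ⟨s', d'⟩ := p
      have hd : d' / s * s = d' := Nat.div_mul_cancel (h (s', d') (by simp))
      have ht := ih fun q hq => h q (by simp [hq])
      simp only [List.map_cons]
      rw [ht]
      simp [hd]

lemma CM_scale {c k : ℕ} : ∀ (l : FlatLayout), CM c l → CM (c * k) (l.map fun p => (p.1, p.2 * k)) := by
  intro l
  induction l generalizing c with
  | nil => intro; trivial
  | cons p t ih =>
      rintro ⟨hd, hcm⟩
      refine ⟨by simp [hd], ?_⟩
      have := ih hcm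
      simpa [Nat.mul_right_comm] using this

lemma size_map_div (s : ℕ) (T : FlatLayout) :
    size (T.map fun p => (p.1, p.2 / s)) = size T := by
  simp [size, List.map_map, Function.comp_def]

lemma phi_map_div {s : ℕ} : ∀ (T : FlatLayout), (∀ p ∈ T, s ∣ p.2) →
    ∀ y, s * phi (T.map fun p => (p.1, p.2 / s)) y = phi T y := by
  intro T
  induction T with
  | nil => simp [phi_nil]
  | cons p t ih =>
      intro h y
      obtain ⟨s', d'⟩ := p
      simp only [List.map_cons, phi_cons]
      rw [Nat.mul_add, ih (fun q hq => h q (by simp [hq])) (y / s')]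
      congr 1
      have hd : s ∣ d' := h (s', d') (by simp)
      rw [← Nat.mul_assoc, Nat.mul_comm s (y % s'), Nat.mul_assoc,
        Nat.mul_div_cancel' hd]

lemma csum_map_div {s : ℕ} : ∀ (T : FlatLayout), (∀ p ∈ T, s ∣ p.2) →
    (T.map fun p => (p.1 - 1) * p.2).sum
      = s * (((T.map fun p => (p.1, p.2 / s)).map fun p => (p.1 - 1) * p.2).sum) := by
  intro T
  induction T with
  | nil => simp
  | cons p t ih =>
      intro h
      obtain ⟨s', d'⟩ := p
      simp only [List.map_cons, List.sum_cons]
      rw [ih (fun q hq => h q (by simp [hq])), Nat.mul_add]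
      congr 1
      have hd : s ∣ d' := h (s', d') (by simp)
      rw [show s * ((s' - 1) * (d' / s)) = (s' - 1) * (s * (d' / s)) by ring,
        Nat.mul_div_cancel' hd]


lemma compact_to_CM : ∀ (n : ℕ) (l : FlatLayout), l.length ≤ n → Valid l →
    (∀ p ∈ l, p.1 ≠ 1) → Compact l → ∃ l', l.Perm l' ∧ CM 1 l' := by
  intro n
  induction n with
  | zero =>
      intro l hl _ _ _
      have : l = [] := List.length_eq_zero_iff.1 (Nat.le_zero.1 hl)
      subst this
      exact ⟨[], List.Perm.refl _, trivial⟩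
  | succ n ihn =>
      intro l hlen hv hsh hc
      match l, hlen, hv, hsh, hc with
      | [], _, _, _, _ => exact ⟨[], List.Perm.refl _, trivial⟩
      | p₀ :: t₀, hlen, hv, hsh, hc =>
        set l := p₀ :: t₀ with hldef
        have hvt₀ : Valid t₀ := fun q hq => hv q (by simp [hldef, hq])
        have hsize2 : 2 ≤ size l := by
          have h1 : 0 < p₀.1 := hv p₀ (by simp [hldef])
          have h2 : p₀.1 ≠ 1 := hsh p₀ (by simp [hldef])
          have h3 : 0 < size t₀ := size_pos hvt₀
          have h4 : size l = p₀.1 * size t₀ := by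
            rw [hldef]; obtain ⟨a, b⟩ := p₀; exact size_cons a b t₀
          rw [h4]
          calc 2 = 2 * 1 := by omega
          _ ≤ p₀.1 * size t₀ := Nat.mul_le_mul (by omega) h3
        obtain ⟨hmt, hinj, hsurj⟩ := hc
        have hC1 : 1 < cosize l := by
          by_contra hcon
          have h0 : phi l 0 = 0 := by
            have := hmt (show (0:ℕ) ∈ {x | x < size l} by simp; omega)
            simp only [Set.mem_setOf_eq] at this; omega
          have h1 : phi l 1 = 0 := by
            have := hmt (show (1:ℕ) ∈ {x | x < size l} by simp; omega)
            simp only [Set.mem_setOf_eq] at this; omega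
          have : (0 : ℕ) = 1 := hinj (by simp; omega) (by simp; omega) (by rw [h0, h1])
          omega
        obtain ⟨x1, hx1, hphix1⟩ := hsurj (show 1 ∈ {y | y < cosize l} by simpa using hC1)
        obtain ⟨⟨s, d⟩, hmem, hd1⟩ := exists_stride_one l x1 hphix1
        dsimp only at hd1
        subst hd1
        have hs2 : 2 ≤ s := by
          have h1 := hv (s, 1) hmem
          have h2 := hsh (s, 1) hmem
          simp at h1 h2; omega
        obtain ⟨T, hperm⟩ : ∃ T, l.Perm ((s, 1) :: T) :=
          ⟨_, List.perm_cons_erase hmem⟩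
        have hvT : Valid T := fun q hq => hv q (hperm.mem_iff.2 (by simp [hq]))
        have hshT : ∀ p ∈ T, p.1 ≠ 1 := fun q hq => hsh q (hperm.mem_iff.2 (by simp [hq]))
        have hc2 : Compact ((s, 1) :: T) := compact_perm hperm ⟨hmt, hinj, hsurj⟩
        obtain ⟨mt2, inj2, surj2⟩ := hc2
        set N := size T with hN
        have hNpos : 0 < N := size_pos hvT
        have hsize : size ((s, 1) :: T) = s * N := size_cons s 1 T
        set C := cosize ((s, 1) :: T) with hCdef
        have henc : ∀ r y, r < s → phi ((s, 1) :: T) (r + s * y) = r + phi T y := by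
          intro r y hr
          rw [phi_cons]
          rw [Nat.add_mul_mod_self_left, Nat.mod_eq_of_lt hr,
            Nat.add_mul_div_left _ _ (by omega : 0 < s), Nat.div_eq_of_lt hr]
          simp
        have inj' : ∀ r r' y y', r < s → r' < s → y < N → y' < N →
            r + phi T y = r' + phi T y' → r = r' ∧ y = y' := by
          intro r r' y y' hr hr' hy hy' heq
          have hb : r + s * y < s * N := lt_mul_of_digits hr hy
          have hb' : r' + s * y' < s * N := lt_mul_of_digits hr' hy'
          have h12 := inj2 (show r + s * y ∈ {x | x < size ((s, 1) :: T)} by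
              simp only [Set.mem_setOf_eq, hsize]; exact hb)
            (show r' + s * y' ∈ {x | x < size ((s, 1) :: T)} by
              simp only [Set.mem_setOf_eq, hsize]; exact hb')
            (by rw [henc _ _ hr, henc _ _ hr', heq])
          have h1 : (r + s * y) % s = (r' + s * y') % s := by rw [h12]
          rw [Nat.add_mul_mod_self_left, Nat.add_mul_mod_self_left,
            Nat.mod_eq_of_lt hr, Nat.mod_eq_of_lt hr'] at h1
          subst h1
          refine ⟨rfl, Nat.eq_of_mul_eq_mul_left (show 0 < s by omega) ?_⟩
          have h2 : r + s * y - r = r + s * y' - r := by rw [h12]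
          simpa using h2
        have mt' : ∀ r y, r < s → y < N → r + phi T y < C := by
          intro r y hr hy
          have hb : r + s * y < s * N := lt_mul_of_digits hr hy
          have := mt2 (show r + s * y ∈ {x | x < size ((s, 1) :: T)} by
            simp only [Set.mem_setOf_eq, hsize]; exact hb)
          simp only [Set.mem_setOf_eq] at this
          rwa [henc _ _ hr] at this
        have surj' : ∀ m, m < C → ∃ r, r < s ∧ ∃ y, y < N ∧ m = r + phi T y := by
          intro m hm
          obtain ⟨x, hx, hpx⟩ := surj2 (show m ∈ {y | y < C} by simpa using hm)
          simp only [Set.mem_setOf_eq, hsize] at hx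
          refine ⟨x % s, Nat.mod_lt _ (by omega), x / s, Nat.div_lt_of_lt_mul hx, ?_⟩
          rw [← hpx, phi_cons]
          omega
        have key : ∀ m, ∀ y, y < N → phi T y = m → s ∣ m := by
          intro m
          induction m using Nat.strong_induction_on with
          | _ m ihm =>
            intro y hy hpy
            by_contra hns
            have hms : m % s ≠ 0 := fun h => hns (Nat.dvd_of_mod_eq_zero h)
            have h0 : m < C := by
              have := mt' 0 y (by omega) hy
              rwa [Nat.zero_add, hpy] at this
            have h1 : s * (m / s) < C := lt_of_le_of_lt (Nat.mul_div_le m s) h0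
            obtain ⟨r', hr', y', hy', heq⟩ := surj' _ h1
            have hle : phi T y' ≤ s * (m / s) := heq ▸ Nat.le_add_left _ _
            have h2 : s * (m / s) < m := by
              rcases Nat.lt_or_ge (s * (m / s)) m with h | h
              · exact h
              · exfalso
                have h3 : s * (m / s) = m := le_antisymm (Nat.mul_div_le m s) h
                have hmod := Nat.div_add_mod m s
                rw [h3] at hmod
                exact hms (by omega)
            have hlt : phi T y' < m := lt_of_le_of_lt hle h2
            obtain ⟨a, ha⟩ := ihm _ hlt y' hy' rfl
            have hr'0 : r' = 0 := by
              have h4 : (r' + s * a) % s = (s * (m / s)) % s := by rw [← ha, ← heq]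
              rwa [Nat.add_mul_mod_self_left, Nat.mul_mod_right,
                Nat.mod_eq_of_lt hr'] at h4
            have hval : phi T y' = s * (m / s) := by
              rw [hr'0, Nat.zero_add] at heq; exact heq.symm
            have hfin := inj' (m % s) 0 y' y (Nat.mod_lt _ (by omega)) (by omega) hy' hy ?_
            · exact hms hfin.1
            · rw [hval, Nat.zero_add, hpy]
              exact Nat.mod_add_div m s
        have hdvdmode : ∀ p ∈ T, s ∣ p.2 := by
          refine strideDvd s T hvT hshT ?_
          intro y hy
          exact key _ y hy rfl
        set T' : FlatLayout := T.map fun p => (p.1, p.2 / s) with hT'def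
        have hvT' : Valid T' := by
          intro q hq
          obtain ⟨p, hp, rfl⟩ := List.mem_map.1 hq
          exact hvT p hp
        have hshT' : ∀ p ∈ T', p.1 ≠ 1 := by
          intro q hq
          obtain ⟨p, hp, rfl⟩ := List.mem_map.1 hq
          exact hshT p hp
        have hsizeT' : size T' = N := size_map_div s T
        have hphiT' : ∀ y, s * phi T' y = phi T y := phi_map_div T hdvdmode
        have hcosC : C = s * cosize T' := by
          have h5 := csum_map_div T hdvdmode
          have h6 : C = 1 + (s - 1) * 1 + (T.map fun p => (p.1 - 1) * p.2).sum :=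
            cosize_cons s 1 T
          have h7 : cosize T' = 1 + ((T'.map fun p => (p.1 - 1) * p.2).sum) := rfl
          rw [h6, h5, h7, Nat.mul_add, Nat.mul_one, Nat.mul_one]
          have h8 : 1 + (s - 1) * 1 = s := by omega
          rw [hT'def]
          omega
        have hcT' : Compact T' := by
          refine ⟨?_, ?_, ?_⟩
          · intro y hy
            simp only [Set.mem_setOf_eq, hsizeT'] at hy ⊢
            have := mt' 0 y (by omega) hy
            rw [Nat.zero_add, ← hphiT'] at this
            rw [hcosC] at this
            exact lt_of_mul_lt_mul_left this (Nat.zero_le s)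
          · intro y hy y' hy' hyy
            simp only [Set.mem_setOf_eq, hsizeT'] at hy hy'
            have h9 : phi T y = phi T y' := by rw [← hphiT', ← hphiT', hyy]
            exact (inj' 0 0 y y' (by omega) (by omega) hy hy'
              (by rw [h9])).2
          · intro z hz
            simp only [Set.mem_setOf_eq] at hz
            have hzC : s * z < C := by
              rw [hcosC]
              exact (Nat.mul_lt_mul_left (show 0 < s by omega)).2 hz
            obtain ⟨r, hr, y, hy, heq⟩ := surj' _ hzC
            have hdv : s ∣ phi T y := key _ y hy rfl
            obtain ⟨a, ha⟩ := hdv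
            have hr0 : r = 0 := by
              have h4 : (r + s * a) % s = (s * z) % s := by rw [← ha, ← heq]
              rwa [Nat.add_mul_mod_self_left, Nat.mul_mod_right,
                Nat.mod_eq_of_lt hr] at h4
            have h10 : phi T y = s * z := by
              rw [hr0, Nat.zero_add] at heq; exact heq.symm
            refine ⟨y, by simp only [Set.mem_setOf_eq, hsizeT']; exact hy, ?_⟩
            have h8 : s * phi T' y = s * z := by rw [hphiT', h10]
            exact Nat.eq_of_mul_eq_mul_left (by omega) h8
        have hlenT' : T'.length ≤ n := by
          have h9 : l.length = T.length + 1 := by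
            rw [hperm.length_eq]; rfl
          have h11 : T'.length = T.length := List.length_map _
          simp only [hldef] at h9 hlen
          omega
        obtain ⟨C', hpermC', hCMC'⟩ := ihn T' hlenT' hvT' hshT' hcT'
        set Cc : FlatLayout := C'.map fun p => (p.1, p.2 * s) with hCc
        have hTC : T.Perm Cc := by
          have h10 : (T'.map fun p => (p.1, p.2 * s)).Perm Cc := hpermC'.map _
          rwa [hT'def, map_div_mul T hdvdmode] at h10
        refine ⟨(s, 1) :: Cc, hperm.trans (hTC.cons _), ?_, ?_⟩
        · rfl
        · have := CM_scale (k := s) C' hCMC'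
          simpa using this


lemma CM_stride_lb {c : ℕ} : ∀ (l : FlatLayout), CM c l → Valid l → ∀ p ∈ l, c ≤ p.2 := by
  intro l
  induction l generalizing c with
  | nil => simp
  | cons p t ih =>
      rintro ⟨hd, hcm⟩ hv q hq
      have hs : 0 < p.1 := hv p (by simp)
      rcases List.mem_cons.1 hq with rfl | hqt
      · omega
      · have := ih hcm (fun r hr => hv r (by simp [hr])) q hqt
        have h2 : c ≤ c * p.1 := Nat.le_mul_of_pos_right _ hs
        omega

lemma CM_pairwise {c : ℕ} : ∀ (l : FlatLayout), CM c l → 0 < c → Valid l →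
    (∀ p ∈ l, p.1 ≠ 1) → l.Pairwise fun p q => p.2 < q.2 := by
  intro l
  induction l generalizing c with
  | nil => intros; exact List.Pairwise.nil
  | cons p t ih =>
      rintro ⟨hd, hcm⟩ hc hv hsh
      have hs : 2 ≤ p.1 := by
        have h1 := hv p (by simp)
        have h2 := hsh p (by simp)
        omega
      have hvt : Valid t := fun r hr => hv r (by simp [hr])
      have hsht : ∀ r ∈ t, r.1 ≠ 1 := fun r hr => hsh r (by simp [hr])
      have hcs : 0 < c * p.1 := Nat.mul_pos hc (by omega)
      refine List.Pairwise.cons ?_ (ih hcm hcs hvt hsht)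
      intro q hq
      have h3 := CM_stride_lb t hcm hvt q hq
      have h4 : c < c * p.1 := by
        calc c = c * 1 := by omega
        _ < c * p.1 := by
          exact (Nat.mul_lt_mul_left (show 0 < c by omega)).2 (by omega)
      omega

lemma prod_Iio_fin {m : ℕ} (i : Fin m) (g : ℕ → ℕ) :
    ∏ j ∈ Finset.Iio i, g j.val = ∏ k ∈ Finset.range i.val, g k := by
  refine Finset.prod_bij (fun j _ => j.val) ?_ ?_ ?_ ?_
  · intro j hj
    show j.val ∈ Finset.range i.val
    rw [Finset.mem_range]
    exact Fin.lt_def.mp (Finset.mem_Iio.mp hj)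
  · intro j _ j' _ h
    exact Fin.val_injective h
  · intro k hk
    have hk' : k < i.val := Finset.mem_range.1 hk
    exact ⟨⟨k, lt_trans hk' i.isLt⟩, Finset.mem_Iio.2 (Fin.lt_def.mpr hk'), rfl⟩
  · intros; rfl

end FlatLayout


open FlatLayout in
theorem compact_iff_perm_colMajor (L : FlatLayout) (hL : L.Valid) :
    Compact L ↔
      ∃ σ : Equiv.Perm (Fin (squeeze L).length),
        ∀ i : Fin (squeeze L).length,
          ((squeeze L).get (σ i)).2 = ∏ j ∈ Finset.Iio i, ((squeeze L).get (σ j)).1 := by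
  constructor
  · intro hc
    obtain ⟨l', hperm, hcm⟩ := compact_to_CM (squeeze L).length (squeeze L) le_rfl
      (valid_squeeze hL) squeeze_shapes ((compact_squeeze hL).2 hc)
    have hvl' : Valid l' := fun q hq => valid_squeeze hL q (hperm.mem_iff.2 hq)
    have hshl' : ∀ p ∈ l', p.1 ≠ 1 := fun q hq => squeeze_shapes q (hperm.mem_iff.2 hq)
    have hpair := CM_pairwise l' hcm (by omega) hvl' hshl'
    have hndl' : l'.Nodup :=
      hpair.imp fun h heq => by rw [heq] at h; exact lt_irrefl _ h
    have hndQ : (squeeze L).Nodup := (hperm.nodup_iff).2 hndl'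
    have hlen : (squeeze L).length = l'.length := hperm.length_eq
    have hmemiff : ∀ x : ℕ × ℕ, x ∈ l' ↔ x ∈ squeeze L := fun x => hperm.symm.mem_iff
    set σ : Equiv.Perm (Fin (squeeze L).length) :=
      (finCongr hlen).trans ((( List.Nodup.getEquiv l' hndl').trans
        (Equiv.subtypeEquivRight hmemiff)).trans ((List.Nodup.getEquiv (squeeze L) hndQ).symm)) with hσdef
    have hget : ∀ i, (squeeze L).get (σ i) = l'.get (finCongr hlen i) := by
      intro i
      have h1 := (List.Nodup.getEquiv (squeeze L) hndQ).apply_symm_apply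
        ⟨l'.get (finCongr hlen i), (hmemiff _).1 (l'.get_mem _)⟩
      exact congrArg Subtype.val h1
    refine ⟨σ, ?_⟩
    intro i
    have hforall := (CM_iff_forall 1 l').1 hcm i.val (by omega)
    rw [one_mul] at hforall
    have hgetD : ∀ j : Fin (squeeze L).length,
        l'.get (finCongr hlen j) = l'.getD j.val (0, 0) := by
      intro j
      rw [List.getD_eq_getElem _ _ (by omega : j.val < l'.length)]
      rfl
    rw [hget i, hgetD i, hforall, ← prod_Iio_fin i (fun k => (l'.getD k (0,0)).1)]
    refine Finset.prod_congr rfl fun j _ => ?_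
    rw [hget j, hgetD j]
  · rintro ⟨σ, hσ⟩
    have hperm : (squeeze L).Perm (List.ofFn (fun i => (squeeze L).get (σ i))) := by
      have h1 := Equiv.Perm.ofFn_comp_perm σ (squeeze L).get
      rw [List.ofFn_get] at h1
      exact h1.symm
    set l' := List.ofFn (fun i => (squeeze L).get (σ i)) with hl'
    have hvl' : Valid l' := fun q hq => valid_squeeze hL q (hperm.mem_iff.2 hq)
    have hlenl' : l'.length = (squeeze L).length := List.length_ofFn
    have hgd : ∀ j (hj : j < (squeeze L).length),
        l'.getD j (0, 0) = (squeeze L).get (σ ⟨j, hj⟩) := by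
      intro j hj
      rw [List.getD_eq_getElem _ _ (by omega : j < l'.length)]
      simp [hl']
    have hcm : CM 1 l' := by
      rw [CM_iff_forall]
      intro k hk
      have hk' : k < (squeeze L).length := by omega
      rw [hgd k hk', one_mul]
      rw [hσ ⟨k, hk'⟩]
      rw [← prod_Iio_fin (⟨k, hk'⟩ : Fin (squeeze L).length)
        (fun t => (l'.getD t (0,0)).1)]
      refine Finset.prod_congr rfl fun j _ => ?_
      rw [hgd j.val j.isLt]
    exact (compact_squeeze hL).1 (compact_perm hperm.symm (compact_of_CM hcm hvl'))
end

section
/- Let A be a complementable flat layout and let B be a flat layout such that (1) A ⊥ B, (2) size(B) = size(comp(A)), (3) B is coalesced, and (4) B is sorted. Then B = comp(A). -/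
namespace CUX
open FlatLayout

def addMode (p : ℕ × ℕ) (M : Multiset ℕ) : Multiset ℕ :=
  (Multiset.range p.1).bind fun x => M.map (x * p.2 + ·)

def vals (L : FlatLayout) : Multiset ℕ := L.foldr addMode {0}

@[simp] lemma vals_nil : vals [] = {0} := rfl
@[simp] lemma vals_cons (p : ℕ × ℕ) (L : FlatLayout) :
    vals (p :: L) = addMode p (vals L) := rfl

lemma addMode_addMode (p q : ℕ × ℕ) (V : Multiset ℕ) :
    addMode p (addMode q V) =
      (Multiset.range p.1).bind fun x => (Multiset.range q.1).bind fun y =>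
        V.map fun v => x * p.2 + (y * q.2 + v) := by
  simp [addMode, Multiset.map_bind, Multiset.map_map, Function.comp]

lemma addMode_comm (p q : ℕ × ℕ) (V : Multiset ℕ) :
    addMode p (addMode q V) = addMode q (addMode p V) := by
  rw [addMode_addMode, addMode_addMode, Multiset.bind_bind]
  apply Multiset.bind_congr
  intro y _
  apply Multiset.bind_congr
  intro x _
  congr 1
  funext v
  ring

lemma range_mul (s t : ℕ) :
    (Multiset.range t).bind (fun y => (Multiset.range s).map (fun x => x + y * s)) =
      Multiset.range (s * t) := by
  induction t with
  | zero => simp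
  | succ t ih =>
    rw [Multiset.range_succ, Multiset.cons_bind, ih, Nat.mul_succ, Multiset.range_add,
      add_comm]
    congr 1
    apply Multiset.map_congr rfl
    intro x _
    simp [mul_comm, Nat.add_comm]



lemma addMode_mul (s s' d : ℕ) (V : Multiset ℕ) :
    addMode (s, d) (addMode (s', s * d) V) = addMode (s * s', d) V := by
  rw [addMode_addMode]
  show _ = (Multiset.range (s * s')).bind fun z => V.map (z * d + ·)
  rw [show s * s' = s * s' from rfl, ← range_mul s s']
  rw [Multiset.bind_assoc]
  rw [Multiset.bind_bind]
  apply Multiset.bind_congr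
  intro x _
  rw [Multiset.bind_map]
  apply Multiset.bind_congr
  intro y _
  congr 1
  funext v
  show y * d + (x * (s * d) + v) = (y + x * s) * d + v
  ring

instance : LeftCommutative addMode := ⟨addMode_comm⟩

lemma vals_perm {L L' : FlatLayout} (h : L.Perm L') : vals L = vals L' :=
  h.foldr_eq _

lemma mem_addMode {a : ℕ} {p : ℕ × ℕ} {M : Multiset ℕ} :
    a ∈ addMode p M ↔ ∃ x < p.1, ∃ m ∈ M, a = x * p.2 + m := by
  simp [addMode, Multiset.mem_bind, Multiset.mem_map, Multiset.mem_range, eq_comm]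

lemma zero_mem_vals {L : FlatLayout} (h : ∀ p ∈ L, 0 < p.1) : 0 ∈ vals L := by
  induction L with
  | nil => simp
  | cons p t ih =>
    rw [vals_cons, mem_addMode]
    exact ⟨0, h p (List.mem_cons_self), 0,
      ih fun q hq => h q (List.mem_cons_of_mem _ hq), by simp⟩

lemma one_le_size {L : FlatLayout} (h : ∀ p ∈ L, 0 < p.1) : 1 ≤ size L := by
  induction L with
  | nil => simp [size]
  | cons p t ih =>
    have h1 := h p (List.mem_cons_self)
    have h2 := ih fun q hq => h q (List.mem_cons_of_mem _ hq)
    simp only [size, List.map_cons, List.prod_cons] at *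
    exact Nat.one_le_iff_ne_zero.mpr (Nat.mul_ne_zero h1.ne' (by omega))

lemma card_vals (L : FlatLayout) : (vals L).card = size L := by
  induction L with
  | nil => simp [size]
  | cons p t ih =>
    simp [addMode, Multiset.card_bind, size, Multiset.map_map, Function.comp_def, ih,
      List.prod_cons, Multiset.map_const', Multiset.sum_replicate, smul_eq_mul]

lemma vals_lb {L : FlatLayout} {c : ℕ} (h : ∀ p ∈ L, c ≤ p.2) :
    ∀ v ∈ vals L, v = 0 ∨ c ≤ v := by
  induction L with
  | nil => intro v hv; simp at hv; omega
  | cons p t ih =>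
    intro v hv
    rw [vals_cons, mem_addMode] at hv
    obtain ⟨x, hx, m, hm, rfl⟩ := hv
    have hm' := ih (fun q hq => h q (List.mem_cons_of_mem _ hq)) m hm
    have hp := h p (List.mem_cons_self)
    rcases hm' with rfl | hc
    · rcases Nat.eq_zero_or_pos x with rfl | hx'
      · left; simp
      · right; have : p.2 ≤ x * p.2 := Nat.le_mul_of_pos_left _ hx'; omega
    · right; omega

lemma two_le_count {a s : ℕ} {f : ℕ → Multiset ℕ} {x₁ x₂ : ℕ}
    (hx₁ : x₁ < s) (hx₂ : x₂ < s) (hne : x₁ ≠ x₂)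
    (h₁ : a ∈ f x₁) (h₂ : a ∈ f x₂) :
    2 ≤ Multiset.count a ((Multiset.range s).bind f) := by
  have m1 : x₁ ∈ Multiset.range s := Multiset.mem_range.mpr hx₁
  have m2 : x₂ ∈ (Multiset.range s).erase x₁ :=
    (Multiset.mem_erase_of_ne hne.symm).mpr (Multiset.mem_range.mpr hx₂)
  rw [← Multiset.cons_erase m1, Multiset.cons_bind, ← Multiset.cons_erase m2,
    Multiset.cons_bind, Multiset.count_add, Multiset.count_add]
  have c1 := Multiset.one_le_count_iff_mem.mpr h₁
  have c2 := Multiset.one_le_count_iff_mem.mpr h₂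
  omega

lemma modeLE_trans : ∀ {a b c : ℕ × ℕ}, ModeLE a b → ModeLE b c → ModeLE a c := by
  rintro ⟨a1, a2⟩ ⟨b1, b2⟩ ⟨c1, c2⟩ hab hbc
  simp only [ModeLE] at *
  omega

instance : IsTrans (ℕ × ℕ) ModeLE := ⟨fun _ _ _ => modeLE_trans⟩

lemma strides_lb_of_sorted {p : ℕ × ℕ} {t : FlatLayout}
    (h : List.Chain' ModeLE (p :: t)) : ∀ q ∈ t, p.2 ≤ q.2 := by
  intro q hq
  have hpw := List.isChain_iff_pairwise.mp h
  rcases List.pairwise_cons.mp hpw with ⟨h1, _⟩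
  have := h1 q hq
  rcases this with h | ⟨h, _⟩ <;> omega

/-- key structural lemma: a sorted layout with all shapes ≥ 2 whose value multiset
is an interval must be a "standard" column-major chain. -/
lemma key : ∀ n (L : FlatLayout), L.length ≤ n → (∀ p ∈ L, 2 ≤ p.1) →
    List.Chain' ModeLE L → vals L = Multiset.range (size L) →
    L.Chain' (fun p q => q.2 = p.1 * p.2) ∧ (∀ p, L.head? = some p → p.2 = 1) := by
  intro n
  induction n with
  | zero =>
    intro L hL _ _ _
    have : L = [] := List.eq_nil_of_length_eq_zero (Nat.le_zero.mp hL)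
    subst this
    exact ⟨List.isChain_nil, by simp⟩
  | succ n ih =>
    intro L hL hsh hsort hv
    match L with
    | [] => exact ⟨List.isChain_nil, by simp⟩
    | [(s, d)] =>
      refine ⟨List.isChain_singleton _, ?_⟩
      rintro p hp
      simp only [List.head?_cons, Option.some.injEq] at hp
      subst hp
      have hs : 2 ≤ s := hsh (s, d) (List.mem_cons_self)
      have h1 : (1 : ℕ) ∈ vals [(s, d)] := by
        rw [hv]
        simp only [Multiset.mem_range, size, List.map_cons, List.map_nil, List.prod_cons,
          List.prod_nil, mul_one]
        omega
      rw [vals_cons, mem_addMode] at h1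
      obtain ⟨x, hx, m, hm, heq⟩ := h1
      simp only [vals_nil, Multiset.mem_singleton] at hm
      subst hm
      simp only [add_zero] at heq
      have := Nat.eq_one_of_mul_eq_one_left heq.symm
      simpa using this
    | (s₁, d₁) :: (s₂, d₂) :: t =>
      set t2 : FlatLayout := (s₂, d₂) :: t with ht2
      have hs₁ : 2 ≤ s₁ := hsh _ (List.mem_cons_self)
      have hs₂ : 2 ≤ s₂ := hsh (s₂, d₂) (by simp [ht2])
      have hshape_t2 : ∀ p ∈ t2, 2 ≤ p.1 := fun p hp => hsh p (List.mem_cons_of_mem _ hp)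
      have hpos_t2 : ∀ p ∈ t2, 0 < p.1 := fun p hp => lt_of_lt_of_le (by norm_num) (hshape_t2 p hp)
      have hsort_t2 : List.Chain' ModeLE t2 := hsort.tail
      have hle12 : ModeLE (s₁, d₁) (s₂, d₂) := List.isChain_cons_cons.mp hsort |>.1
      have hN : size ((s₁, d₁) :: t2) = s₁ * size t2 := by simp [size]
      have hst2 : 2 ≤ size t2 := by
        have : 1 ≤ size t := one_le_size fun q hq => lt_of_lt_of_le (by norm_num)
          (hsh q (List.mem_cons_of_mem _ (List.mem_cons_of_mem _ hq)))
        have : s₂ * 1 ≤ s₂ * size t := Nat.mul_le_mul_left _ this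
        simp only [size, ht2, List.map_cons, List.prod_cons] at *
        omega
      have hcount : ∀ a : ℕ, Multiset.count a (vals ((s₁, d₁) :: t2)) ≤ 1 := by
        intro a
        rw [hv]
        exact Multiset.nodup_iff_count_le_one.mp (Multiset.nodup_range _) a
      have h0t2 : 0 ∈ vals t2 := zero_mem_vals hpos_t2
      have hd₂lb : ∀ p ∈ t2, d₂ ≤ p.2 := by
        intro p hp
        rcases List.mem_cons.mp hp with rfl | hp'
        · exact le_refl _
        · exact strides_lb_of_sorted hsort_t2 p hp'
      have hlbt2 : ∀ v ∈ vals t2, v = 0 ∨ d₂ ≤ v := vals_lb hd₂lb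
      -- step 1 : d₁ = 1
      have hd₁ : d₁ = 1 := by
        have hd₁d₂ : d₁ ≤ d₂ := by rcases hle12 with h | ⟨h, _⟩ <;> omega
        have h1mem : (1 : ℕ) ∈ vals ((s₁, d₁) :: t2) := by
          rw [hv, Multiset.mem_range, hN]
          have := hst2
          nlinarith
        rw [vals_cons, mem_addMode] at h1mem
        obtain ⟨x, hx, m, hm, heq⟩ := h1mem
        have hd₁le : d₁ ≤ 1 := by
          rcases hlbt2 m hm with rfl | hc
          · simp only [add_zero] at heq
            have := Nat.eq_one_of_mul_eq_one_left heq.symm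
            omega
          · omega
        -- exclude d₁ = 0
        rcases Nat.lt_or_ge d₁ 1 with h0 | h1
        · exfalso
          have hd₁0 : d₁ = 0 := by omega
          have : 2 ≤ Multiset.count 0 (vals ((s₁, d₁) :: t2)) := by
            rw [vals_cons]
            exact two_le_count (f := fun x => (vals t2).map (x * d₁ + ·))
              (show 0 < s₁ by omega) (show 1 < s₁ by omega) (by norm_num)
              (Multiset.mem_map.mpr ⟨0, h0t2, by simp [hd₁0]⟩)
              (Multiset.mem_map.mpr ⟨0, h0t2, by simp [hd₁0]⟩)
          have := hcount 0
          omega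
        · omega
      subst hd₁
      -- step 2 : d₂ = s₁
      have hd₂pos : 1 ≤ d₂ := by rcases hle12 with h | ⟨h, _⟩ <;> omega
      have hd₂mem : d₂ ∈ vals t2 := by
        rw [ht2, vals_cons, mem_addMode]
        exact ⟨1, by omega, 0, zero_mem_vals fun q hq => hpos_t2 q (List.mem_cons_of_mem _ hq),
          by simp⟩
      have hd₂s₁ : d₂ = s₁ := by
        rcases Nat.lt_trichotomy d₂ s₁ with hlt | heq | hgt
        · exfalso
          have : 2 ≤ Multiset.count d₂ (vals ((s₁, 1) :: t2)) := by
            rw [vals_cons]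
            exact two_le_count (f := fun x => (vals t2).map (x * 1 + ·))
              (show 0 < s₁ by omega) hlt (by omega)
              (Multiset.mem_map.mpr ⟨d₂, hd₂mem, by simp⟩)
              (Multiset.mem_map.mpr ⟨0, h0t2, by simp⟩)
          have := hcount d₂
          omega
        · exact heq
        · exfalso
          have hs₁mem : s₁ ∈ vals ((s₁, 1) :: t2) := by
            rw [hv, Multiset.mem_range, hN]
            nlinarith
          rw [vals_cons, mem_addMode] at hs₁mem
          obtain ⟨x, hx, m, hm, heq⟩ := hs₁mem
          rcases hlbt2 m hm with rfl | hc <;> omega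
      subst hd₂s₁
      -- step 3 : merge and recurse
      set L' : FlatLayout := (d₂ * s₂, 1) :: t with hL'
      have hvals' : vals L' = vals ((d₂, 1) :: t2) := by
        rw [ht2, hL', vals_cons, vals_cons, vals_cons]
        have := addMode_mul d₂ s₂ 1 (vals t)
        simpa using this.symm
      have hsize' : size L' = size ((d₂, 1) :: t2) := by
        simp [size, hL', ht2, mul_assoc]
      have hsort' : List.Chain' ModeLE L' := by
        rw [hL']
        rcases t with _ | ⟨r, t'⟩
        · exact List.isChain_singleton _
        · refine List.isChain_cons_cons.mpr ⟨?_, (hsort_t2).tail⟩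
          have := strides_lb_of_sorted hsort_t2 r (List.mem_cons_self)
          left
          simp only at this ⊢
          omega
      have hsh' : ∀ p ∈ L', 2 ≤ p.1 := by
        intro p hp
        rcases List.mem_cons.mp hp with rfl | hp'
        · have : d₂ * 1 ≤ d₂ * s₂ := Nat.mul_le_mul_left _ (by omega)
          simp only
          omega
        · exact hsh p (List.mem_cons_of_mem _ (List.mem_cons_of_mem _ hp'))
      have hlen' : L'.length ≤ n := by
        simp only [hL', ht2, List.length_cons] at hL ⊢
        omega
      obtain ⟨hstd', hhead'⟩ := ih L' hlen' hsh' hsort' (by rw [hvals', hsize', hv, hN])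
      constructor
      · refine List.isChain_cons_cons.mpr ⟨by simp, ?_⟩
        rcases t with _ | ⟨r, t'⟩
        · exact List.isChain_singleton _
        · refine List.isChain_cons_cons.mpr ⟨?_, ?_⟩
          · have := (List.isChain_cons_cons.mp hstd').1
            simp only [mul_one] at this ⊢
            rw [this]; ring
          · exact hstd'.tail
      · rintro p hp
        simp only [List.head?_cons, Option.some.injEq] at hp
        subst hp
        rfl


lemma vals_eq_map_phi (L : FlatLayout) :
    vals L = (Multiset.range (size L)).map (phi L) := by
  induction L with
  | nil =>
    show ({0} : Multiset ℕ) = (Multiset.range 1).map (phi [])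
    simp [phi, size]
  | cons p t ih =>
    obtain ⟨s, d⟩ := p
    have hsz : size ((s, d) :: t) = s * size t := by simp [size]
    rw [hsz, ← range_mul s (size t), Multiset.map_bind]
    rw [vals_cons, ih, addMode]
    -- LHS : bind (range s) (fun x => map (fun y => x*d + phi t y) (range (size t)))
    -- RHS : bind (range (size t)) (fun y => map (phi ((s,d)::t)) (map (fun x => x + y*s) (range s)))
    have lhs_eq : ((Multiset.range s).bind fun x =>
        ((Multiset.range (size t)).map (phi t)).map (x * d + ·)) =
        (Multiset.range s).bind fun x => (Multiset.range (size t)).bind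
          fun y => {x * d + phi t y} := by
      apply Multiset.bind_congr
      intro x _
      rw [Multiset.map_map, Multiset.bind_singleton]
      rfl
    rw [lhs_eq, Multiset.bind_bind]
    apply Multiset.bind_congr
    intro y _
    have : Multiset.map (phi ((s, d) :: t)) (Multiset.map (fun x => x + y * s)
        (Multiset.range s)) = (Multiset.range s).map fun x => phi ((s, d) :: t) (x + y * s) := by
      rw [Multiset.map_map]; rfl
    rw [this, ← Multiset.bind_singleton (Multiset.range s)
      (fun x => phi ((s, d) :: t) (x + y * s))]
    apply Multiset.bind_congr
    intro x hx
    have hx' : x < s := Multiset.mem_range.mp hx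
    have h1 : (x + y * s) % s = x := by
      rw [Nat.add_mul_mod_self_right, Nat.mod_eq_of_lt hx']
    have h2 : (x + y * s) / s = y := by
      rw [Nat.add_mul_div_right _ _ (by omega : 0 < s), Nat.div_eq_of_lt hx', zero_add]
    show ({x * d + phi t y} : Multiset ℕ) = {phi ((s, d) :: t) (x + y * s)}
    rw [show phi ((s, d) :: t) (x + y * s) = (x + y * s) % s * d + phi t ((x + y * s) / s)
      from rfl, h1, h2]

lemma compact_vals {L : FlatLayout} (h : Compact L) :
    vals L = Multiset.range (size L) := by
  have hmaps := h.mapsTo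
  have hinj := h.injOn
  have hsurj := h.surjOn
  have hcoe : (↑(Finset.range (size L)) : Set ℕ) = {x | x < size L} := by
    ext x; simp
  have hinj' : Set.InjOn (phi L) ↑(Finset.range (size L)) := by rw [hcoe]; exact hinj
  have hF : (Finset.range (size L)).image (phi L) = Finset.range (cosize L) := by
    ext y
    simp only [Finset.mem_image, Finset.mem_range]
    constructor
    · rintro ⟨x, hx, rfl⟩
      exact hmaps hx
    · intro hy
      obtain ⟨x, hx, hxy⟩ := hsurj hy
      exact ⟨x, hx, hxy⟩
  have hcard : size L = cosize L := by
    have := Finset.card_image_of_injOn hinj'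
    rw [hF] at this
    simpa using this.symm
  have hnodup : ((Multiset.range (size L)).map (phi L)).Nodup := by
    apply Multiset.Nodup.map_on
    · intro x hx y hy hxy
      exact hinj (Multiset.mem_range.mp hx) (Multiset.mem_range.mp hy) hxy
    · exact Multiset.nodup_range _
  have hval : (Multiset.range (size L)).map (phi L) = Multiset.range (cosize L) := by
    rw [← Finset.range_val (cosize L), ← hF, Finset.image_val, Finset.range_val,
      Multiset.dedup_eq_self.mpr hnodup]
  rw [vals_eq_map_phi, hval, hcard]

lemma addMode_one {p : ℕ × ℕ} (hp : p.1 = 1) (M : Multiset ℕ) : addMode p M = M := by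
  obtain ⟨s, d⟩ := p
  simp only at hp
  subst hp
  simp [addMode, Multiset.range_succ, Multiset.range_zero]

lemma vals_squeeze (L : FlatLayout) : vals (squeeze L) = vals L := by
  induction L with
  | nil => rfl
  | cons p t ih =>
    by_cases hp : p.1 = 1
    · have : squeeze (p :: t) = squeeze t := by
        simp [squeeze, List.filter_cons, hp]
      rw [this, ih, vals_cons, addMode_one hp]
    · have : squeeze (p :: t) = p :: squeeze t := by
        simp [squeeze, List.filter_cons, hp]
      rw [this, vals_cons, vals_cons, ih]

lemma size_squeeze (L : FlatLayout) : size (squeeze L) = size L := by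
  induction L with
  | nil => rfl
  | cons p t ih =>
    by_cases hp : p.1 = 1
    · have : squeeze (p :: t) = squeeze t := by
        simp [squeeze, List.filter_cons, hp]
      rw [this, ih]
      simp [size, hp]
    · have : squeeze (p :: t) = p :: squeeze t := by
        simp [squeeze, List.filter_cons, hp]
      rw [this]
      simp only [size, List.map_cons, List.prod_cons] at *
      rw [ih]

lemma size_perm {L L' : FlatLayout} (h : L.Perm L') : size L = size L' :=
  (h.map Prod.fst).prod_eq

lemma size_append (L L' : FlatLayout) : size (L ++ L') = size L * size L' := by
  simp [size]

lemma std_gt : ∀ {M' : FlatLayout} {p : ℕ × ℕ},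
    List.Chain' (fun p q => q.2 = p.1 * p.2) (p :: M') → (∀ q ∈ p :: M', 2 ≤ q.1) →
    1 ≤ p.2 → ∀ q ∈ M', p.2 < q.2 := by
  intro M'
  induction M' with
  | nil => intro p _ _ _ q hq; simp at hq
  | cons r M'' ih =>
    intro p hchain hsh hpos q hq
    have hr : r.2 = p.1 * p.2 := (List.isChain_cons_cons.mp hchain).1
    have hp1 : 2 ≤ p.1 := hsh p (List.mem_cons_self)
    have hrgt : p.2 < r.2 := by
      rw [hr]
      calc p.2 = 1 * p.2 := (one_mul _).symm
      _ < p.1 * p.2 := by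
        apply Nat.mul_lt_mul_of_lt_of_le (by omega) (le_refl _) (by omega)
    rcases List.mem_cons.mp hq with rfl | hq'
    · exact hrgt
    · have hrpos : 1 ≤ r.2 := by omega
      have := ih (List.isChain_cons_cons.mp hchain).2
        (fun q hq => hsh q (List.mem_cons_of_mem _ hq)) hrpos q hq'
      omega

lemma sorted_head_min {A : FlatLayout} {m : ℕ × ℕ}
    (hA : A.Pairwise ModeLE) (hm : m ∈ A) (hlt : ∀ q ∈ A, q ≠ m → m.2 < q.2) :
    ∃ A₂, A = m :: A₂ := by
  cases A with
  | nil => simp at hm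
  | cons q A₂ =>
    by_cases hqm : q = m
    · subst hqm; exact ⟨A₂, rfl⟩
    · exfalso
      have hmA₂ : m ∈ A₂ := by
        rcases List.mem_cons.mp hm with h | h
        · exact absurd h.symm hqm
        · exact h
      have : ModeLE q m := (List.pairwise_cons.mp hA).1 m hmA₂
      have hlt' := hlt q (List.mem_cons_self) hqm
      rcases this with h | ⟨h, _⟩ <;> omega

/-- the gap modes: complement of `A` built scanning from accumulated size `w`. -/
def gaps : ℕ → FlatLayout → FlatLayout
  | _, [] => []
  | w, (a, e) :: t => (if e / w = 1 then ([] : FlatLayout) else [(e / w, w)]) ++ gaps (a * e) t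

lemma size_gaps_cons (w a e : ℕ) (t : FlatLayout) :
    size (gaps w ((a, e) :: t)) = e / w * size (gaps (a * e) t) := by
  show size ((if e / w = 1 then ([] : FlatLayout) else [(e / w, w)]) ++ gaps (a * e) t) = _
  rw [size_append]
  by_cases h : e / w = 1 <;> simp [h, size]


lemma walk : ∀ n (M A B : FlatLayout) (w : ℕ), M.length ≤ n → 1 ≤ w →
    M.Chain' (fun p q => q.2 = p.1 * p.2) → (∀ p ∈ M, 2 ≤ p.1) →
    (∀ p, M.head? = some p → p.2 = w) →
    A.Pairwise ModeLE → B.Pairwise ModeLE →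
    B.Chain' (fun p q => p.1 * p.2 ≠ q.2) →
    (A ++ B).Perm M →
    size B = size (gaps w A) →
    B = gaps w A := by
  intro n
  induction n with
  | zero =>
    intro M A B w hlen _ _ _ _ _ _ _ hperm hsize
    have hM : M = [] := List.eq_nil_of_length_eq_zero (Nat.le_zero.mp hlen)
    subst hM
    have h0 : A ++ B = [] := hperm.eq_nil
    have hA : A = [] := (List.append_eq_nil_iff.mp h0).1
    have hB : B = [] := (List.append_eq_nil_iff.mp h0).2
    subst hA; subst hB; rfl
  | succ n ih =>
    intro M A B w hlen hw hchain hsh hhead hApw hBpw hBco hperm hsize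
    match M with
    | [] =>
      have h0 : A ++ B = [] := hperm.eq_nil
      have hA : A = [] := (List.append_eq_nil_iff.mp h0).1
      have hB : B = [] := (List.append_eq_nil_iff.mp h0).2
      subst hA; subst hB; rfl
    | (σ, w0) :: M' =>
      have hw0 : w0 = w := hhead (σ, w0) rfl
      subst w0
      have hσ : 2 ≤ σ := hsh (σ, w) (List.mem_cons_self)
      have hM' : ∀ q ∈ M', w < q.2 :=
        std_gt hchain hsh hw
      have hmem : (σ, w) ∈ A ++ B := hperm.mem_iff.mpr (List.mem_cons_self)
      have hminAB : ∀ q ∈ A ++ B, q ≠ (σ, w) → w < q.2 := by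
        intro q hq hne
        have : q ∈ (σ, w) :: M' := hperm.mem_iff.mp hq
        rcases List.mem_cons.mp this with h | h
        · exact absurd h hne
        · exact hM' q h
      by_cases hcase : (σ, w) ∈ A
      · -- the minimal mode belongs to A
        obtain ⟨A₂, rfl⟩ := sorted_head_min hApw hcase
          (fun q hq => hminAB q (List.mem_append_left _ hq))
        have hperm' : (A₂ ++ B).Perm M' := by
          have : ((σ, w) :: (A₂ ++ B)).Perm ((σ, w) :: M') := hperm
          exact this.cons_inv
        have hhead' : ∀ p, M'.head? = some p → p.2 = σ * w := by
          intro p hp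
          cases M' with
          | nil => simp at hp
          | cons r M'' =>
            simp only [List.head?_cons, Option.some.injEq] at hp
            subst hp
            exact (List.isChain_cons_cons.mp hchain).1
        have hrec : B = gaps (σ * w) A₂ := by
          apply ih M' A₂ B (σ * w)
          · simpa using Nat.lt_succ_iff.mp (lt_of_lt_of_le (by simp) hlen)
          · have : 1 * 1 ≤ σ * w := Nat.mul_le_mul (by omega) hw
            omega
          · exact hchain.tail
          · exact fun p hp => hsh p (List.mem_cons_of_mem _ hp)
          · exact hhead'
          · exact (List.pairwise_cons.mp hApw).2
          · exact hBpw
          · exact hBco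
          · exact hperm'
          · rw [hsize, size_gaps_cons, Nat.div_self (by omega : 0 < w), one_mul]
        rw [hrec]
        show _ = (if w / w = 1 then ([] : FlatLayout) else [(w / w, w)]) ++ gaps (σ * w) A₂
        rw [Nat.div_self (by omega : 0 < w)]
        simp
      · -- the minimal mode belongs to B
        have hcaseB : (σ, w) ∈ B := by
          rcases List.mem_append.mp hmem with h | h
          · exact absurd h hcase
          · exact h
        obtain ⟨B₂, rfl⟩ := sorted_head_min hBpw hcaseB
          (fun q hq => hminAB q (List.mem_append_right _ hq))
        have hperm' : (A ++ B₂).Perm M' := by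
          have h1 : (A ++ (σ, w) :: B₂).Perm ((σ, w) :: (A ++ B₂)) := List.perm_middle
          exact (h1.symm.trans hperm).cons_inv
        cases M' with
        | nil =>
          exfalso
          have h0 : A ++ B₂ = [] := hperm'.eq_nil
          have hA0 : A = [] := (List.append_eq_nil_iff.mp h0).1
          have hB0 : B₂ = [] := (List.append_eq_nil_iff.mp h0).2
          subst hA0; subst hB0
          simp only [size, List.map_cons, List.map_nil, List.prod_cons, List.prod_nil,
            mul_one] at hsize
          show False
          have : gaps w [] = [] := rfl
          rw [this] at hsize
          simp [size] at hsize
          omega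
        | cons m2 M'' =>
          obtain ⟨σ₂, w₂⟩ := m2
          have hw₂ : w₂ = σ * w := (List.isChain_cons_cons.mp hchain).1
          subst hw₂
          have hσ₂ : 2 ≤ σ₂ := hsh (σ₂, σ * w) (by simp)
          have hM'' : ∀ q ∈ M'', σ * w < q.2 :=
            std_gt hchain.tail (fun q hq => hsh q (List.mem_cons_of_mem _ hq))
              (show 0 < σ * w from Nat.mul_pos (by omega) (by omega))
          have hmem2 : (σ₂, σ * w) ∈ A ++ B₂ := hperm'.mem_iff.mpr (List.mem_cons_self)
          have hminAB2 : ∀ q ∈ A ++ B₂, q ≠ (σ₂, σ * w) → σ * w < q.2 := by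
            intro q hq hne
            have : q ∈ (σ₂, σ * w) :: M'' := hperm'.mem_iff.mp hq
            rcases List.mem_cons.mp this with h | h
            · exact absurd h hne
            · exact hM'' q h
          have hnotB₂ : (σ₂, σ * w) ∉ B₂ := by
            intro hmemB₂
            obtain ⟨B₃, hB₃⟩ := sorted_head_min (List.pairwise_cons.mp hBpw).2 hmemB₂
              (fun q hq => hminAB2 q (List.mem_append_right _ hq))
            rw [hB₃] at hBco
            exact (List.isChain_cons_cons.mp hBco).1 rfl
          have hcaseA2 : (σ₂, σ * w) ∈ A := by
            rcases List.mem_append.mp hmem2 with h | h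
            · exact h
            · exact absurd h hnotB₂
          obtain ⟨A₂, rfl⟩ := sorted_head_min hApw hcaseA2
            (fun q hq => hminAB2 q (List.mem_append_left _ hq))
          have hperm'' : (A₂ ++ B₂).Perm M'' := by
            have : ((σ₂, σ * w) :: (A₂ ++ B₂)).Perm ((σ₂, σ * w) :: M'') := hperm'
            exact this.cons_inv
          have hhead'' : ∀ p, M''.head? = some p → p.2 = σ₂ * (σ * w) := by
            intro p hp
            cases M'' with
            | nil => simp at hp
            | cons r M₃ =>
              simp only [List.head?_cons, Option.some.injEq] at hp
              subst hp
              exact (List.isChain_cons_cons.mp hchain.tail).1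
          have hsizeB : size ((σ, w) :: B₂) = σ * size B₂ := by simp [size]
          have hgapsA : gaps w ((σ₂, σ * w) :: A₂) = (σ, w) :: gaps (σ₂ * (σ * w)) A₂ := by
            show (if (σ * w) / w = 1 then ([] : FlatLayout) else [((σ * w) / w, w)]) ++ _ = _
            rw [Nat.mul_div_cancel _ (by omega : 0 < w)]
            have : ¬ (σ = 1) := by omega
            simp [this]
          have hrec : B₂ = gaps (σ₂ * (σ * w)) A₂ := by
            apply ih M'' A₂ B₂ (σ₂ * (σ * w))
            · have : ((σ, w) :: (σ₂, σ * w) :: M'').length ≤ n + 1 := hlen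
              simp only [List.length_cons] at this ⊢
              omega
            · have h1 : 0 < σ * w := by positivity
              have : 1 * 1 ≤ σ₂ * (σ * w) := Nat.mul_le_mul (by omega) (by omega)
              omega
            · exact hchain.tail.tail
            · exact fun p hp => hsh p (List.mem_cons_of_mem _ (List.mem_cons_of_mem _ hp))
            · exact hhead''
            · exact (List.pairwise_cons.mp hApw).2
            · exact (List.pairwise_cons.mp hBpw).2
            · exact hBco.tail
            · exact hperm''
            · -- size B₂ = size (gaps (σ₂ * (σ * w)) A₂)
              rw [hsizeB, hgapsA] at hsize
              have : size ((σ, w) :: gaps (σ₂ * (σ * w)) A₂) =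
                  σ * size (gaps (σ₂ * (σ * w)) A₂) := by simp [size]
              rw [this] at hsize
              exact Nat.eq_of_mul_eq_mul_left (by omega) hsize
          rw [hgapsA, hrec]


lemma squeeze_cons (p : ℕ × ℕ) (rest : FlatLayout) :
    squeeze (p :: rest) = (if p.1 = 1 then ([] : FlatLayout) else [p]) ++ squeeze rest := by
  by_cases h : p.1 = 1 <;> simp [squeeze, List.filter_cons, h]

lemma squeeze_zip : ∀ (t : FlatLayout) (a e : ℕ),
    squeeze (((((a, e) : ℕ × ℕ) :: t).zip t).map fun pq =>
      (pq.2.2 / (pq.1.1 * pq.1.2), pq.1.1 * pq.1.2)) = gaps (a * e) t := by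
  intro t
  induction t with
  | nil => intro a e; rfl
  | cons p t' ih =>
    intro a e
    obtain ⟨a', e'⟩ := p
    show squeeze ((e' / (a * e), a * e) :: _) = _
    rw [squeeze_cons]
    have ih' := ih a' e'
    simp only [List.zip] at ih' ⊢
    rw [ih']
    rfl

lemma squeeze_compModes (l : FlatLayout) : squeeze (compModes l) = gaps 1 l := by
  cases l with
  | nil => rfl
  | cons p t =>
    obtain ⟨a, e⟩ := p
    show squeeze ((e, 1) :: _) = _
    rw [squeeze_cons, squeeze_zip t a e]
    show _ = (if e / 1 = 1 then ([] : FlatLayout) else [(e / 1, 1)]) ++ gaps (a * e) t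
    rw [Nat.div_one]

lemma gaps_chain : ∀ (l : FlatLayout) (w : ℕ), 1 ≤ w →
    (∀ p ∈ l, 1 ≤ p.2 ∧ 2 ≤ p.1) → l.Chain' (fun p q => p.1 * p.2 ∣ q.2) →
    (∀ p, l.head? = some p → w ∣ p.2) →
    (gaps w l).Chain' (fun p q => p.1 * p.2 ≠ q.2) ∧ ∀ q ∈ gaps w l, w ≤ q.2 := by
  intro l
  induction l with
  | nil => intro w _ _ _ _; exact ⟨List.isChain_nil, by intro q hq; simp [gaps] at hq⟩
  | cons p t ih =>
    intro w hw hmem hchain hhead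
    obtain ⟨a, e⟩ := p
    have he : 1 ≤ e := (hmem (a, e) (List.mem_cons_self)).1
    have ha : 2 ≤ a := (hmem (a, e) (List.mem_cons_self)).2
    have hwe : w ∣ e := hhead (a, e) rfl
    have hae : 0 < a * e := Nat.mul_pos (by omega) he
    have hhead' : ∀ q, t.head? = some q → a * e ∣ q.2 := by
      intro q hq
      cases t with
      | nil => simp at hq
      | cons r t'' =>
        simp only [List.head?_cons, Option.some.injEq] at hq
        subst hq
        exact (List.isChain_cons_cons.mp hchain).1
    obtain ⟨C, LB⟩ := ih (a * e) hae (fun q hq => hmem q (List.mem_cons_of_mem _ hq))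
      hchain.tail hhead'
    have hwle : w ≤ e := Nat.le_of_dvd he hwe
    have heae : e < a * e := by
      calc e = 1 * e := (one_mul _).symm
      _ < a * e := Nat.mul_lt_mul_of_lt_of_le (by omega) (le_refl _) he
    constructor
    · show List.Chain' _ ((if e / w = 1 then ([] : FlatLayout) else [(e / w, w)]) ++ _)
      by_cases h1 : e / w = 1
      · simpa [h1] using C
      · rw [if_neg h1]
        show List.Chain' _ ((e / w, w) :: gaps (a * e) t)
        refine List.isChain_cons.mpr ?_
        refine ⟨?_, C⟩
        intro y hy
        have hymem : y ∈ gaps (a * e) t := List.mem_of_mem_head? hy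
        have := LB y hymem
        show e / w * w ≠ y.2
        rw [Nat.div_mul_cancel hwe]
        omega
    · intro q hq
      show w ≤ q.2
      rcases List.mem_append.mp hq with h | h
      · by_cases h1 : e / w = 1
        · simp [h1] at h
        · rw [if_neg h1] at h
          simp only [List.mem_singleton] at h
          subst h
          exact le_refl _
      · have := LB q h
        omega

lemma coalAux_eq_self : ∀ {l : FlatLayout},
    l.Chain' (fun p q => p.1 * p.2 ≠ q.2) → coalAux l = l := by
  intro l
  induction l with
  | nil => intro _; rfl
  | cons p rest ih =>
    intro h
    cases rest with
    | nil => rfl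
    | cons q rest' =>
      have hne : p.1 * p.2 ≠ q.2 := (List.isChain_cons_cons.mp h).1
      have ih' : coalAux (q :: rest') = q :: rest' := ih h.tail
      show (match coalAux (q :: rest') with
        | [] => [p]
        | q' :: rest'' => if p.1 * p.2 = q'.2 then (p.1 * q'.1, p.2) :: rest''
            else p :: q' :: rest'') = _
      rw [ih']
      simp [hne]

lemma comp_eq_gaps {A : FlatLayout} (hc : Complementable A)
    (hmem : ∀ p ∈ sortL (squeeze A), 1 ≤ p.2 ∧ 2 ≤ p.1) :
    comp A = gaps 1 (sortL (squeeze A)) := by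
  show coal (compModes (sortL (squeeze A))) = _
  unfold coal
  rw [squeeze_compModes]
  exact coalAux_eq_self (gaps_chain _ 1 (le_refl 1) hmem hc (fun p _ => one_dvd _)).1

lemma sortL_pairwise (L : FlatLayout) : (sortL L).Pairwise ModeLE := by
  have htrans : ∀ (a b c : ℕ × ℕ), decide (ModeLE a b) = true → decide (ModeLE b c) = true →
      decide (ModeLE a c) = true := by
    intro a b c hab hbc
    simp only [decide_eq_true_eq] at *
    exact modeLE_trans hab hbc
  have htotal : ∀ (a b : ℕ × ℕ), (decide (ModeLE a b) || decide (ModeLE b a)) = true := by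
    intro a b
    have hab : ModeLE a b ∨ ModeLE b a := by unfold ModeLE; omega
    rcases hab with h | h <;> simp [h]
  have := List.pairwise_mergeSort htrans htotal L
  exact this.imp (fun h => of_decide_eq_true h)


lemma std_stride_pos {M : FlatLayout}
    (hstd : M.Chain' (fun p q => q.2 = p.1 * p.2)) (hsh : ∀ p ∈ M, 2 ≤ p.1)
    (hhead : ∀ p, M.head? = some p → p.2 = 1) : ∀ p ∈ M, 1 ≤ p.2 := by
  cases M with
  | nil => intro p hp; simp at hp
  | cons m0 Mt =>
    intro p hp
    have h0 : m0.2 = 1 := hhead m0 rfl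
    rcases List.mem_cons.mp hp with rfl | hp'
    · omega
    · have := std_gt hstd hsh (by omega) p hp'
      omega

end CUX

open FlatLayout in
theorem complement_unique (A B : FlatLayout) (hA : A.Valid) (hc : Complementable A)
    (hB : B.Valid) (h1 : Perp A B) (h2 : size B = size (comp A))
    (h3 : Coalesced B) (h4 : Sorted B) :
    B = comp A := by
  classical
  set A' := sortL (squeeze A) with hA'def
  have hA'perm : A'.Perm (squeeze A) := List.mergeSort_perm _ _
  have hsqA : ∀ p ∈ squeeze A, 2 ≤ p.1 := by
    intro p hp
    have := List.mem_filter.mp hp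
    have h1' : p ∈ A := this.1
    have h2' : p.1 ≠ 1 := by simpa using this.2
    have := hA p h1'
    omega
  have hA'shape : ∀ p ∈ A', 2 ≤ p.1 := fun p hp => hsqA p (hA'perm.mem_iff.mp hp)
  have hBshape : ∀ p ∈ B, 2 ≤ p.1 := by
    intro p hp
    have := hB p hp
    have := h3.1 p hp
    omega
  have hBfilter : squeeze B = B :=
    List.filter_eq_self.mpr fun p hp => by simpa using h3.1 p hp
  have hsq : squeeze (A ++ B) = squeeze A ++ B := by
    show List.filter _ (A ++ B) = _
    rw [List.filter_append]
    congr 1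
  set M := sortL (squeeze (A ++ B)) with hMdef
  have hMperm0 : M.Perm (squeeze A ++ B) := by
    have h : M.Perm (squeeze (A ++ B)) := List.mergeSort_perm _ _
    rw [hsq] at h
    exact h
  have hMpermAB : (A' ++ B).Perm M := (hA'perm.append_right B).trans hMperm0.symm
  have hMshape : ∀ p ∈ M, 2 ≤ p.1 := by
    intro p hp
    rcases List.mem_append.mp (hMperm0.mem_iff.mp hp) with h | h
    · exact hsqA p h
    · exact hBshape p h
  have hMpw : M.Pairwise ModeLE := CUX.sortL_pairwise _
  have hMsorted : M.Chain' ModeLE := hMpw.isChain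
  have hvalsAB : CUX.vals (A ++ B) = Multiset.range (size (A ++ B)) := CUX.compact_vals h1
  have hvalsM : CUX.vals M = Multiset.range (size M) := by
    have e1 : CUX.vals M = CUX.vals (A ++ B) := by
      calc CUX.vals M = CUX.vals (squeeze (A ++ B)) :=
            CUX.vals_perm (List.mergeSort_perm _ _)
      _ = CUX.vals (A ++ B) := CUX.vals_squeeze _
    have e2 : size M = size (A ++ B) := by
      calc size M = size (squeeze (A ++ B)) := CUX.size_perm (List.mergeSort_perm _ _)
      _ = size (A ++ B) := CUX.size_squeeze _
    rw [e1, e2, hvalsAB]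
  obtain ⟨hMstd, hMhead⟩ := CUX.key M.length M le_rfl hMshape hMsorted hvalsM
  have hMstride : ∀ p ∈ M, 1 ≤ p.2 := CUX.std_stride_pos hMstd hMshape hMhead
  have hA'stride : ∀ p ∈ A', 1 ≤ p.2 ∧ 2 ≤ p.1 := by
    intro p hp
    have hpM : p ∈ M := hMpermAB.mem_iff.mp (List.mem_append_left _ hp)
    exact ⟨hMstride p hpM, hA'shape p hp⟩
  have hcomp : comp A = CUX.gaps 1 A' := CUX.comp_eq_gaps hc hA'stride
  have hApw : A'.Pairwise ModeLE := CUX.sortL_pairwise _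
  have hBpw : B.Pairwise ModeLE := List.isChain_iff_pairwise.mp h4
  have hsize' : size B = size (CUX.gaps 1 A') := by rw [h2, hcomp]
  have := CUX.walk M.length M A' B 1 le_rfl le_rfl hMstd hMshape hMhead hApw hBpw
    h3.2 hMpermAB hsize'
  rw [this, hcomp]
end
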